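/- Let p ≥ 1, h ∈ ℝ, and let (A_k)_{k≥0} and (Â_k)_{k≥0} be sequences in ℝ^{p×p} and (Q_k)_{k≥0} a sequence of real p×p orthogonal matrices such that Â_k = A_{k−1} + h·Q_{k−1}·(A_{k−1} − Â_{k−1})·Q_{k−1}ᵀ for all k ≥ 1. Then for every k ≥ 1: ‖Â_k − A_k‖₂ ≤ Σ_{l=0}^{k−1} |h|^l·‖A_{k−l} − A_{k−1−l}‖₂ + |h|^k·‖Â₀ − A₀‖₂. -/
import Mathlib

open Matrix

/-- Spectral norm: operator norm induced by the Euclidean vector norm. -/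
noncomputable def specNorm {m n : Type*} [Fintype m] [Fintype n] [DecidableEq n]
    (M : Matrix m n ℝ) : ℝ :=
  ‖LinearMap.toContinuousLinearMap (Matrix.toEuclideanLin M)‖

open scoped Matrix.Norms.L2Operator in
lemma specNorm_eq_norm {m n : Type*} [Fintype m] [Fintype n] [DecidableEq n]
    (M : Matrix m n ℝ) : specNorm M = ‖M‖ := by
  rw [Matrix.l2_opNorm_def]; rfl

theorem accelerated_forward_recursion_bound (p : ℕ) (hp : 1 ≤ p) (h : ℝ)
    (A Ahat Q : ℕ → Matrix (Fin p) (Fin p) ℝ)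
    (hQ : ∀ k, (Q k)ᵀ * Q k = 1)
    (hrec : ∀ k, Ahat (k + 1) = A k + h • (Q k * (A k - Ahat k) * (Q k)ᵀ)) :
    ∀ k, 1 ≤ k →
      specNorm (Ahat k - A k) ≤
        (∑ l ∈ Finset.range k, |h| ^ l * specNorm (A (k - l) - A (k - 1 - l))) +
          |h| ^ k * specNorm (Ahat 0 - A 0) := by
  open scoped Matrix.Norms.L2Operator in
  simp only [specNorm_eq_norm]
  have hQn : ∀ k, ‖Q k‖ = 1 := by
    intro k
    have h1 : (Q k)ᴴ * Q k = 1 := by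
      rw [show (Q k)ᴴ = (Q k)ᵀ from by ext i j; simp]; exact hQ k
    have h2 : ‖(Q k)ᴴ * Q k‖ = ‖Q k‖ * ‖Q k‖ := Matrix.l2_opNorm_conjTranspose_mul_self _
    rw [h1] at h2
    have hpos : (0:ℝ) ≤ ‖Q k‖ := norm_nonneg _
    have hone : ‖(1 : Matrix (Fin p) (Fin p) ℝ)‖ = 1 := by
      haveI : Nonempty (Fin p) := ⟨⟨0, hp⟩⟩
      exact norm_one
    nlinarith [h2, hone]
  have hQtn : ∀ k, ‖(Q k)ᵀ‖ = 1 := by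
    intro k
    have : (Q k)ᴴ = (Q k)ᵀ := by ext i j; simp
    rw [← this, Matrix.l2_opNorm_conjTranspose, hQn]
  -- key step bound
  have key : ∀ k, ‖Ahat (k+1) - A (k+1)‖ ≤ ‖A (k+1) - A k‖ + |h| * ‖Ahat k - A k‖ := by
    intro k
    have hd : Ahat (k+1) - A (k+1) = (A k - A (k+1)) + h • (Q k * (A k - Ahat k) * (Q k)ᵀ) := by
      rw [hrec k]; abel
    rw [hd]
    calc ‖(A k - A (k+1)) + h • (Q k * (A k - Ahat k) * (Q k)ᵀ)‖
        ≤ ‖A k - A (k+1)‖ + ‖h • (Q k * (A k - Ahat k) * (Q k)ᵀ)‖ := norm_add_le _ _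
      _ ≤ ‖A (k+1) - A k‖ + |h| * ‖Ahat k - A k‖ := by
          rw [norm_sub_rev, norm_smul, Real.norm_eq_abs]
          gcongr
          calc ‖Q k * (A k - Ahat k) * (Q k)ᵀ‖
              ≤ ‖Q k * (A k - Ahat k)‖ * ‖(Q k)ᵀ‖ := Matrix.l2_opNorm_mul _ _
            _ ≤ ‖Q k‖ * ‖A k - Ahat k‖ * ‖(Q k)ᵀ‖ := by
                gcongr; exact Matrix.l2_opNorm_mul _ _
            _ = ‖Ahat k - A k‖ := by rw [hQn, hQtn, norm_sub_rev]; ring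
  intro k hk
  induction k with
  | zero => omega
  | succ n ih =>
    rcases Nat.eq_zero_or_pos n with rfl | hn
    · simpa using key 0
    · have IH := ih hn
      calc ‖Ahat (n+1) - A (n+1)‖ ≤ ‖A (n+1) - A n‖ + |h| * ‖Ahat n - A n‖ := key n
        _ ≤ ‖A (n+1) - A n‖ + |h| * ((∑ l ∈ Finset.range n, |h| ^ l * ‖A (n - l) - A (n - 1 - l)‖)
              + |h| ^ n * ‖Ahat 0 - A 0‖) := by gcongr
        _ = (∑ l ∈ Finset.range (n+1), |h| ^ l * ‖A (n + 1 - l) - A (n + 1 - 1 - l)‖)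
              + |h| ^ (n+1) * ‖Ahat 0 - A 0‖ := by
            rw [Finset.sum_range_succ' (fun l => |h| ^ l * ‖A (n + 1 - l) - A (n + 1 - 1 - l)‖)]
            rw [mul_add, Finset.mul_sum]
            have : ∀ l ∈ Finset.range n, |h| * (|h| ^ l * ‖A (n - l) - A (n - 1 - l)‖)
                = |h| ^ (l+1) * ‖A (n + 1 - (l+1)) - A (n + 1 - 1 - (l+1))‖ := by
              intro l hl
              have : n + 1 - (l+1) = n - l := by omega
              rw [this]
              have : n + 1 - 1 - (l+1) = n - 1 - l := by omega
              rw [this]; ring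
            rw [Finset.sum_congr rfl this]
            simp only [pow_zero, one_mul, Nat.sub_zero, pow_succ,
              show 1 + n - 1 = n from by omega, show n + 1 - 1 = n from by omega]
            ring
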